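/- arXiv:2105.10594 — 3 statements merged into one kernel-verified Lean document; each statement's English description precedes it below -/
import Mathlib

section
/- The binary symmetric Rényi divergence function r_α(p) = (1/(α-1))·log(p^α(1-p)^{1-α} + (1-p)^α p^{1-α}) is convex on the interval (0,1), for any α > 1. -/
open Real

lemma lemA (x l : ℝ) (hx : 0 ≤ x) (hl0 : 0 ≤ l) (hl1 : l ≤ 1) :
    Real.sinh (l * x) ≤ l * Real.sinh x := by
  have hd : ∀ y : ℝ, HasDerivAt (fun y => l * Real.sinh y - Real.sinh (l * y))
      (l * Real.cosh y - Real.cosh (l * y) * l) y := by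
    intro y
    have h1 : HasDerivAt (fun y : ℝ => l * Real.sinh y) (l * Real.cosh y) y :=
      (Real.hasDerivAt_sinh y).const_mul l
    have h2 : HasDerivAt (fun y : ℝ => Real.sinh (l * y)) (Real.cosh (l * y) * l) y := by
      have := (Real.hasDerivAt_sinh (l * y)).comp y ((hasDerivAt_id y).const_mul l)
      simpa [Function.comp_def] using this
    exact h1.sub h2
  have hmono : MonotoneOn (fun y => l * Real.sinh y - Real.sinh (l * y)) (Set.Ici (0:ℝ)) := by
    apply monotoneOn_of_deriv_nonneg (convex_Ici 0)
    · exact fun y _ => (hd y).continuousAt.continuousWithinAt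
    · exact fun y _ => (hd y).differentiableAt.differentiableWithinAt
    · intro y hy
      rw [interior_Ici] at hy
      rw [(hd y).deriv]
      have hle : Real.cosh (l * y) ≤ Real.cosh y := by
        rw [Real.cosh_le_cosh, abs_of_nonneg (mul_nonneg hl0 hy.le), abs_of_nonneg hy.le]
        nlinarith [(Set.mem_Ioi.1 hy).le]
      nlinarith
  have := hmono Set.self_mem_Ici (Set.mem_Ici.2 hx) hx
  simp only [mul_zero, Real.sinh_zero, sub_zero] at this
  linarith

lemma lemB (c v : ℝ) (hc : 1 ≤ c) :
    (c + 1) * (Real.cosh ((c - 1) * v) - 1) ≤ (c - 1) * (Real.cosh ((c + 1) * v) - 1) := by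
  wlog hv : 0 ≤ v generalizing v
  · have := this (-v) (by linarith)
    simpa [mul_neg, Real.cosh_neg] using this
  have hcp : (0:ℝ) < c + 1 := by linarith
  have hy0 : 0 ≤ (c + 1) * v / 2 := by positivity
  have hl0 : (0:ℝ) ≤ (c - 1) / (c + 1) := div_nonneg (by linarith) (by linarith)
  have hl1 : (c - 1) / (c + 1) ≤ 1 := by rw [div_le_one hcp]; linarith
  have hA := lemA ((c + 1) * v / 2) ((c - 1) / (c + 1)) hy0 hl0 hl1
  have harg : (c - 1) / (c + 1) * ((c + 1) * v / 2) = (c - 1) * v / 2 := by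
    field_simp
  rw [harg] at hA
  set s1 := Real.sinh ((c - 1) * v / 2) with hs1def
  set s2 := Real.sinh ((c + 1) * v / 2) with hs2def
  have hA' : (c + 1) * s1 ≤ (c - 1) * s2 := by
    have h := mul_le_mul_of_nonneg_left hA (le_of_lt hcp)
    have he : (c + 1) * ((c - 1) / (c + 1) * s2) = (c - 1) * s2 := by field_simp
    linarith [he ▸ h]
  have hch1 : Real.cosh ((c - 1) * v) = 2 * s1 ^ 2 + 1 := by
    have h := Real.cosh_two_mul ((c - 1) * v / 2)
    rw [show 2 * ((c - 1) * v / 2) = (c - 1) * v by ring] at h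
    rw [h, Real.cosh_sq]; ring
  have hch2 : Real.cosh ((c + 1) * v) = 2 * s2 ^ 2 + 1 := by
    have h := Real.cosh_two_mul ((c + 1) * v / 2)
    rw [show 2 * ((c + 1) * v / 2) = (c + 1) * v by ring] at h
    rw [h, Real.cosh_sq]; ring
  have hs1 : 0 ≤ s1 := Real.sinh_nonneg_iff.2 (div_nonneg (mul_nonneg (by linarith) hv) (by norm_num))
  have hs2 : 0 ≤ s2 := Real.sinh_nonneg_iff.2 (div_nonneg (mul_nonneg (by linarith) hv) (by norm_num))
  rw [hch1, hch2]
  have hsq : ((c + 1) * s1) * ((c + 1) * s1) ≤ ((c - 1) * s2) * ((c - 1) * s2) :=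
    mul_self_le_mul_self (mul_nonneg hcp.le hs1) hA'
  nlinarith [mul_nonneg (mul_nonneg (by linarith : (0:ℝ) ≤ c - 1) hs2) hs2, hcp, sq_nonneg s1, sq_nonneg s2]

lemma lemC (c v : ℝ) (hc : 1 ≤ c) :
    Real.cosh v * Real.cosh (c * v) - c * (Real.sinh v * Real.sinh (c * v))
      ≤ (c ^ 2 - 1) * Real.cosh v + c ^ 2 := by
  have h1 : Real.cosh ((c + 1) * v) = Real.cosh (c * v) * Real.cosh v + Real.sinh (c * v) * Real.sinh v := by
    rw [show (c + 1) * v = c * v + v by ring, Real.cosh_add]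
  have h2 : Real.cosh ((c - 1) * v) = Real.cosh (c * v) * Real.cosh v - Real.sinh (c * v) * Real.sinh v := by
    rw [show (c - 1) * v = c * v - v by ring, Real.cosh_sub]
  have hB := lemB c v hc
  have hcv : 1 ≤ Real.cosh v := Real.one_le_cosh v
  nlinarith [mul_nonneg (by nlinarith : (0:ℝ) ≤ c ^ 2 - 1) (by linarith : (0:ℝ) ≤ Real.cosh v - 1)]



lemma keyD' (α p : ℝ) (hα : 1 < α) (hp0 : 0 < p) (hp1 : p < 1) :
    (p / (1 - p)) ^ (2 * α - 1) * (p ^ 2 + α * (1 - 2 * p))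
      + ((1 - p) / p) ^ (2 * α - 1) * (p ^ 2 + (1 - α) * (1 - 2 * p))
      ≤ (2 * α - 1) ^ 2 - (p ^ 2 + (1 - p) ^ 2) := by
  have hq : (0:ℝ) < 1 - p := by linarith
  set c : ℝ := 2 * α - 1 with hcdef
  have hc : 1 ≤ c := by simp only [hcdef]; linarith
  set r : ℝ := p / (1 - p) with hrdef
  have hr : 0 < r := div_pos hp0 hq
  set v : ℝ := Real.log r with hvdef
  set R : ℝ := Real.exp (c * v) with hRdef
  have hR : 0 < R := Real.exp_pos _
  have hev : Real.exp v = r := Real.exp_log hr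
  have hrc : r ^ c = R := by
    rw [Real.rpow_def_of_pos hr, hRdef, mul_comm]
  have hrc' : ((1 - p) / p) ^ c = R⁻¹ := by
    have h1 : (1 - p) / p = r⁻¹ := by rw [hrdef, inv_div]
    rw [h1, Real.inv_rpow hr.le, hrc]
  have hC := lemC c v hc
  rw [Real.cosh_eq, Real.sinh_eq, Real.cosh_eq, Real.sinh_eq, hev, Real.exp_neg, hev,
    ← hRdef, Real.exp_neg, ← hRdef] at hC
  -- relation p = r/(1+r)
  have h1r : (0:ℝ) < 1 + r := by linarith
  have hpr : p = r / (1 + r) := by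
    rw [hrdef]; field_simp; ring
  rw [hrc, hrc', hpr]
  have hkey : c ^ 2 - ((r / (1 + r)) ^ 2 + (1 - r / (1 + r)) ^ 2)
      - (R * ((r / (1 + r)) ^ 2 + α * (1 - 2 * (r / (1 + r))))
        + R⁻¹ * ((r / (1 + r)) ^ 2 + (1 - α) * (1 - 2 * (r / (1 + r)))))
      = (((c ^ 2 - 1) * ((r + r⁻¹) / 2) + c ^ 2)
        - ((r + r⁻¹) / 2 * ((R + R⁻¹) / 2) - c * ((r - r⁻¹) / 2 * ((R - R⁻¹) / 2))))
        * (2 * r / (1 + r) ^ 2) := by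
    rw [hcdef]
    field_simp
    ring
  have hfac : 0 ≤ 2 * r / (1 + r) ^ 2 := by positivity
  nlinarith [mul_nonneg (by linarith : (0:ℝ) ≤ ((c ^ 2 - 1) * ((r + r⁻¹) / 2) + c ^ 2)
        - ((r + r⁻¹) / 2 * ((R + R⁻¹) / 2) - c * ((r - r⁻¹) / 2 * ((R - R⁻¹) / 2)))) hfac]


noncomputable def Faux (α p : ℝ) : ℝ :=
  p ^ α * (1 - p) ^ (1 - α) + (1 - p) ^ α * p ^ (1 - α)

noncomputable def Phiaux (α p : ℝ) : ℝ :=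
  (p ^ α * (1 - p) ^ (1 - α) * (α - p) + (1 - p) ^ α * p ^ (1 - α) * (1 - α - p)) / (p * (1 - p))

noncomputable def N2aux (α p : ℝ) : ℝ :=
  p ^ α * (1 - p) ^ (1 - α) * (α - p) ^ 2 + (1 - p) ^ α * p ^ (1 - α) * (1 - α - p) ^ 2
    - Faux α p * (p * (1 - p))
    - (p ^ α * (1 - p) ^ (1 - α) * (α - p) + (1 - p) ^ α * p ^ (1 - α) * (1 - α - p)) * (1 - 2 * p)

lemma hderPow (β γ : ℝ) {p : ℝ} (hp0 : 0 < p) (hq : 0 < 1 - p) :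
    HasDerivAt (fun x : ℝ => x ^ β * (1 - x) ^ γ)
      (p ^ β * (1 - p) ^ γ * (β * (1 - p) - γ * p) / (p * (1 - p))) p := by
  have h1 : HasDerivAt (fun x : ℝ => x ^ β) (β * p ^ (β - 1)) p :=
    Real.hasDerivAt_rpow_const (Or.inl hp0.ne')
  have h2 : HasDerivAt (fun x : ℝ => (1 - x) ^ γ) (γ * (1 - p) ^ (γ - 1) * (-1)) p := by
    have hout : HasDerivAt (fun y : ℝ => y ^ γ) (γ * (1 - p) ^ (γ - 1)) (1 - p) :=
      Real.hasDerivAt_rpow_const (Or.inl hq.ne')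
    have hin : HasDerivAt (fun x : ℝ => 1 - x) (-1) p := by
      exact (hasDerivAt_id p).const_sub 1
    simpa [Function.comp_def] using hout.comp p hin
  have h := h1.mul h2
  refine h.congr_deriv ?_
  rw [Real.rpow_sub hp0, Real.rpow_sub hq, Real.rpow_one, Real.rpow_one]
  field_simp
  ring

lemma hderF (α : ℝ) {p : ℝ} (hp0 : 0 < p) (hq : 0 < 1 - p) :
    HasDerivAt (Faux α) (Phiaux α p) p := by
  have h1 := hderPow α (1 - α) hp0 hq
  have h2 := hderPow (1 - α) α hp0 hq
  have h2' : HasDerivAt (fun x : ℝ => (1 - x) ^ α * x ^ (1 - α))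
      ((1 - p) ^ α * p ^ (1 - α) * (1 - α - p) / (p * (1 - p))) p := by
    have : (fun x : ℝ => (1 - x) ^ α * x ^ (1 - α)) = fun x : ℝ => x ^ (1 - α) * (1 - x) ^ α := by
      funext x; ring
    rw [this]
    convert h2 using 1
    ring
  have h := h1.add h2'
  have : HasDerivAt (fun x : ℝ => x ^ α * (1 - x) ^ (1 - α) + (1 - x) ^ α * x ^ (1 - α))
      (Phiaux α p) p := by
    refine h.congr_deriv ?_
    rw [Phiaux]
    have hA : α * (1 - p) - (1 - α) * p = α - p := by ring
    have hB : (1 - α) * (1 - p) - α * p = 1 - α - p := by ring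
    rw [hA] at *
    field_simp
  exact this

lemma hderPhi (α : ℝ) {p : ℝ} (hp0 : 0 < p) (hq : 0 < 1 - p) :
    HasDerivAt (Phiaux α) (N2aux α p / (p * (1 - p)) ^ 2) p := by
  have hD : HasDerivAt (fun x : ℝ => x * (1 - x)) (1 - 2 * p) p := by
    have h := (hasDerivAt_id p).mul ((hasDerivAt_const p (1:ℝ)).sub (hasDerivAt_id p))
    simp only [id_eq, Pi.sub_apply] at h
    refine h.congr_deriv ?_
    ring
  have ha := hderPow α (1 - α) hp0 hq
  have hb' : HasDerivAt (fun x : ℝ => (1 - x) ^ α * x ^ (1 - α))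
      ((1 - p) ^ α * p ^ (1 - α) * (1 - α - p) / (p * (1 - p))) p := by
    have heq : (fun x : ℝ => (1 - x) ^ α * x ^ (1 - α)) = fun x : ℝ => x ^ (1 - α) * (1 - x) ^ α := by
      funext x; ring
    rw [heq]
    convert hderPow (1 - α) α hp0 hq using 1
    ring
  have hlin1 : HasDerivAt (fun x : ℝ => α - x) (-1) p := by
    exact (hasDerivAt_id p).const_sub α
  have hlin2 : HasDerivAt (fun x : ℝ => 1 - α - x) (-1) p := by
    exact (hasDerivAt_id p).const_sub (1 - α)
  have hA : α * (1 - p) - (1 - α) * p = α - p := by ring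
  rw [hA] at ha
  have hG0 : HasDerivAt (fun x : ℝ => x ^ α * (1 - x) ^ (1 - α) * (α - x)
      + (1 - x) ^ α * x ^ (1 - α) * (1 - α - x))
      (p ^ α * (1 - p) ^ (1 - α) * (α - p) / (p * (1 - p)) * (α - p)
        + p ^ α * (1 - p) ^ (1 - α) * (-1)
        + ((1 - p) ^ α * p ^ (1 - α) * (1 - α - p) / (p * (1 - p)) * (1 - α - p)
          + (1 - p) ^ α * p ^ (1 - α) * (-1))) p := by
    exact (ha.mul hlin1).add (hb'.mul hlin2)
  have hDne : p * (1 - p) ≠ 0 := by positivity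
  have h := hG0.div hD hDne
  have heq2 : Phiaux α = fun x : ℝ => (x ^ α * (1 - x) ^ (1 - α) * (α - x)
      + (1 - x) ^ α * x ^ (1 - α) * (1 - α - x)) / (x * (1 - x)) := rfl
  rw [heq2]
  refine h.congr_deriv ?_
  rw [N2aux, Faux]
  field_simp
  ring


lemma Faux_pos (α : ℝ) {p : ℝ} (hp0 : 0 < p) (hq : 0 < 1 - p) : 0 < Faux α p := by
  rw [Faux]
  have h1 := Real.rpow_pos_of_pos hp0 α
  have h2 := Real.rpow_pos_of_pos hq (1 - α)
  have h3 := Real.rpow_pos_of_pos hq α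
  have h4 := Real.rpow_pos_of_pos hp0 (1 - α)
  positivity

lemma core (α : ℝ) (hα : 1 < α) {p : ℝ} (hp0 : 0 < p) (hp1 : p < 1) :
    0 ≤ N2aux α p / (p * (1 - p)) ^ 2 * Faux α p - Phiaux α p * Phiaux α p := by
  have hq : 0 < 1 - p := by linarith
  have ha : 0 < p ^ α * (1 - p) ^ (1 - α) :=
    mul_pos (Real.rpow_pos_of_pos hp0 α) (Real.rpow_pos_of_pos hq (1 - α))
  have hb : 0 < (1 - p) ^ α * p ^ (1 - α) :=
    mul_pos (Real.rpow_pos_of_pos hq α) (Real.rpow_pos_of_pos hp0 (1 - α))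
  have hDne : p * (1 - p) ≠ 0 := by positivity
  have hab : (p ^ α * (1 - p) ^ (1 - α)) * ((1 - p) ^ α * p ^ (1 - α)) = p * (1 - p) := by
    have h1 : p ^ α * p ^ (1 - α) = p := by
      rw [← Real.rpow_add hp0, show α + (1 - α) = (1:ℝ) by ring, Real.rpow_one]
    have h2 : (1 - p) ^ (1 - α) * (1 - p) ^ α = 1 - p := by
      rw [← Real.rpow_add hq, show (1 - α) + α = (1:ℝ) by ring, Real.rpow_one]
    calc (p ^ α * (1 - p) ^ (1 - α)) * ((1 - p) ^ α * p ^ (1 - α))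
        = (p ^ α * p ^ (1 - α)) * ((1 - p) ^ (1 - α) * (1 - p) ^ α) := by ring
      _ = p * (1 - p) := by rw [h1, h2]
  have hqc : ((1:ℝ) - p) ^ (2 * α - 1) ≠ 0 := (Real.rpow_pos_of_pos hq _).ne'
  have hpc : p ^ (2 * α - 1) ≠ 0 := (Real.rpow_pos_of_pos hp0 _).ne'
  have ha2 : (p ^ α * (1 - p) ^ (1 - α)) ^ 2 = p * (1 - p) * (p / (1 - p)) ^ (2 * α - 1) := by
    rw [mul_pow, sq, sq, ← Real.rpow_add hp0, ← Real.rpow_add hq,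
      Real.div_rpow hp0.le hq.le,
      show α + α = 1 + (2 * α - 1) by ring, show (1 - α) + (1 - α) = 1 - (2 * α - 1) by ring,
      Real.rpow_add hp0, Real.rpow_one, Real.rpow_sub hq, Real.rpow_one]
    field_simp
  have hb2 : ((1 - p) ^ α * p ^ (1 - α)) ^ 2 = p * (1 - p) * ((1 - p) / p) ^ (2 * α - 1) := by
    rw [mul_pow, sq, sq, ← Real.rpow_add hq, ← Real.rpow_add hp0,
      Real.div_rpow hq.le hp0.le,
      show α + α = 1 + (2 * α - 1) by ring, show (1 - α) + (1 - α) = 1 - (2 * α - 1) by ring,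
      Real.rpow_add hq, Real.rpow_one, Real.rpow_sub hp0, Real.rpow_one]
    field_simp
  have hKey := keyD' α p hα hp0 hp1
  have hNF : 0 ≤ N2aux α p * Faux α p
      - (p ^ α * (1 - p) ^ (1 - α) * (α - p) + (1 - p) ^ α * p ^ (1 - α) * (1 - α - p)) ^ 2 := by
    have e1 : N2aux α p * Faux α p
        - (p ^ α * (1 - p) ^ (1 - α) * (α - p) + (1 - p) ^ α * p ^ (1 - α) * (1 - α - p)) ^ 2
        = (p ^ α * (1 - p) ^ (1 - α)) * ((1 - p) ^ α * p ^ (1 - α))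
            * ((2 * α - 1) ^ 2 - (p ^ 2 + (1 - p) ^ 2))
          - (p ^ α * (1 - p) ^ (1 - α)) ^ 2 * (p ^ 2 + α * (1 - 2 * p))
          - ((1 - p) ^ α * p ^ (1 - α)) ^ 2 * (p ^ 2 + (1 - α) * (1 - 2 * p)) := by
      simp only [N2aux, Faux]; ring
    rw [e1, hab, ha2, hb2]
    have h2 := mul_nonneg (mul_pos hp0 hq).le (sub_nonneg.2 hKey)
    nlinarith [h2]
  have hrw : N2aux α p / (p * (1 - p)) ^ 2 * Faux α p - Phiaux α p * Phiaux α p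
      = (N2aux α p * Faux α p
        - (p ^ α * (1 - p) ^ (1 - α) * (α - p) + (1 - p) ^ α * p ^ (1 - α) * (1 - α - p)) ^ 2)
        / (p * (1 - p)) ^ 2 := by
    simp only [Phiaux]
    field_simp
  rw [hrw]
  exact div_nonneg hNF (sq_nonneg _)

noncomputable def ralpha (α p : ℝ) : ℝ :=
  (α - 1)⁻¹ * Real.log (p ^ α * (1 - p) ^ (1 - α) + (1 - p) ^ α * p ^ (1 - α))

theorem stmt0 (α : ℝ) (hα : 1 < α) :
    ConvexOn ℝ (Set.Ioo (0:ℝ) 1) (fun p => ralpha α p) := by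
  have key : ConvexOn ℝ (Set.Ioo (0:ℝ) 1) (fun p => Real.log (Faux α p)) := by
    apply convexOn_of_hasDerivWithinAt2_nonneg (convex_Ioo (0:ℝ) 1)
      (f' := fun p => Phiaux α p / Faux α p)
      (f'' := fun p => (N2aux α p / (p * (1 - p)) ^ 2 * Faux α p - Phiaux α p * Phiaux α p)
        / Faux α p ^ 2)
    · intro x hx
      obtain ⟨hx0, hx1⟩ := hx
      have hq : 0 < 1 - x := by linarith
      exact ((hderF α hx0 hq).log (Faux_pos α hx0 hq).ne').continuousAt.continuousWithinAt
    · intro x hx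
      rw [interior_Ioo] at hx
      obtain ⟨hx0, hx1⟩ := hx
      have hq : 0 < 1 - x := by linarith
      exact ((hderF α hx0 hq).log (Faux_pos α hx0 hq).ne').hasDerivWithinAt
    · intro x hx
      rw [interior_Ioo] at hx
      obtain ⟨hx0, hx1⟩ := hx
      have hq : 0 < 1 - x := by linarith
      exact ((hderPhi α hx0 hq).div (hderF α hx0 hq) (Faux_pos α hx0 hq).ne').hasDerivWithinAt
    · intro x hx
      rw [interior_Ioo] at hx
      obtain ⟨hx0, hx1⟩ := hx
      exact div_nonneg (core α hα hx0 hx1) (sq_nonneg _)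
  have h2 := key.smul (show (0:ℝ) ≤ (α - 1)⁻¹ from inv_nonneg.2 (by linarith))
  simpa [ralpha, Faux, smul_eq_mul] using h2
end

section
/- For α > 1, the function r_α is monotonically decreasing on (0, 1/2]: if 0 < p ≤ q ≤ 1/2 then r_α(p) ≥ r_α(q). -/
lemma hasDerivF (α x : ℝ) (hx : 0 < x) (h1x : x < 1) :
    HasDerivAt (fun y : ℝ => y ^ α * (1 - y) ^ (1 - α) + (1 - y) ^ α * y ^ (1 - α))
      (α * ((x/(1-x)) ^ (α-1) - (x/(1-x)) ^ (1-α)) +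
        (α-1) * ((x/(1-x)) ^ α - (x/(1-x)) ^ (-α))) x := by
  have h1x' : (0:ℝ) < 1 - x := by linarith
  have hsub : HasDerivAt (fun y : ℝ => 1 - y) (-1) x := (hasDerivAt_id x).const_sub 1
  have h1 : HasDerivAt (fun y : ℝ => y ^ α) (α * x ^ (α - 1)) x :=
    Real.hasDerivAt_rpow_const (Or.inl hx.ne')
  have h2 : HasDerivAt (fun y : ℝ => (1 - y) ^ (1 - α))
      (-1 * (1 - α) * (1 - x) ^ (1 - α - 1)) x :=
    hsub.rpow_const (Or.inl h1x'.ne')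
  have h3 : HasDerivAt (fun y : ℝ => (1 - y) ^ α) (-1 * α * (1 - x) ^ (α - 1)) x :=
    hsub.rpow_const (Or.inl h1x'.ne')
  have h4 : HasDerivAt (fun y : ℝ => y ^ (1 - α)) ((1 - α) * x ^ (1 - α - 1)) x :=
    Real.hasDerivAt_rpow_const (Or.inl hx.ne')
  have h := (h1.mul h2).add (h3.mul h4)
  refine h.congr_deriv ?_
  have key : ∀ e : ℝ, (x/(1-x)) ^ e = x ^ e * (1-x) ^ (-e) := by
    intro e
    rw [Real.div_rpow hx.le h1x'.le, Real.rpow_neg h1x'.le, div_eq_mul_inv]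
  rw [key, key, key, key,
    show -(α-1) = 1-α by ring, show -(1-α) = α-1 by ring, show -(-α) = α by ring,
    show (1:ℝ)-α-1 = -α by ring]
  ring

theorem stmt2 (α p q : ℝ) (hα : 1 < α) (hp : 0 < p) (hpq : p ≤ q) (hq : q ≤ 1/2) :
    ralpha α q ≤ ralpha α p := by
  have hq0 : 0 < q := lt_of_lt_of_le hp hpq
  have hq1 : q < 1 := by linarith
  have hF : AntitoneOn (fun y : ℝ => y ^ α * (1 - y) ^ (1 - α) + (1 - y) ^ α * y ^ (1 - α))
      (Set.Icc p q) := by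
    apply antitoneOn_of_hasDerivWithinAt_nonpos (convex_Icc p q)
      (f' := fun x => α * ((x/(1-x)) ^ (α-1) - (x/(1-x)) ^ (1-α)) +
        (α-1) * ((x/(1-x)) ^ α - (x/(1-x)) ^ (-α)))
    · intro x hx
      exact ((hasDerivF α x (lt_of_lt_of_le hp hx.1) (by linarith [hx.2])).continuousAt).continuousWithinAt
    · intro x hx
      rw [interior_Icc] at hx
      exact (hasDerivF α x (lt_of_lt_of_le hp hx.1.le) (by linarith [hx.2])).hasDerivWithinAt
    · intro x hx
      rw [interior_Icc] at hx
      have hx0 : 0 < x := lt_of_lt_of_le hp hx.1.le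
      have hx2 : x < 1/2 := lt_of_lt_of_le hx.2 hq
      set t := x / (1 - x) with ht
      have ht0 : 0 < t := by
        apply div_pos hx0; linarith
      have ht1 : t ≤ 1 := by
        rw [ht, div_le_one (by linarith)]; linarith
      have e1 : t ^ (α-1) ≤ t ^ (1-α) :=
        Real.rpow_le_rpow_of_exponent_ge ht0 ht1 (by linarith)
      have e2 : t ^ α ≤ t ^ (-α) :=
        Real.rpow_le_rpow_of_exponent_ge ht0 ht1 (by linarith)
      have h1 : α * (t ^ (α-1) - t ^ (1-α)) ≤ 0 :=
        mul_nonpos_of_nonneg_of_nonpos (by linarith) (by linarith)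
      have h2 : (α-1) * (t ^ α - t ^ (-α)) ≤ 0 :=
        mul_nonpos_of_nonneg_of_nonpos (by linarith) (by linarith)
      linarith
  have hle := hF (Set.left_mem_Icc.2 hpq) (Set.right_mem_Icc.2 hpq) hpq
  simp only at hle
  unfold ralpha
  have hposq : 0 < q ^ α * (1 - q) ^ (1 - α) + (1 - q) ^ α * q ^ (1 - α) := by
    have := Real.rpow_pos_of_pos hq0 α
    have := Real.rpow_pos_of_pos hq0 (1-α)
    have h1q : (0:ℝ) < 1 - q := by linarith
    have := Real.rpow_pos_of_pos h1q α
    have := Real.rpow_pos_of_pos h1q (1-α)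
    positivity
  have hinv : (0:ℝ) ≤ (α - 1)⁻¹ := inv_nonneg.2 (by linarith)
  exact mul_le_mul_of_nonneg_left (Real.log_le_log hposq hle) hinv
end

section
/- Let c ∈ [0, 1/2), p ∈ (0, 1/2], d ≥ 1, and K = exp(-2(1/2-c)²d). Let P = p·δ_{c^d} + (1-p)·δ_{(1-c)^d} and Q = (1-p)·δ_{c^d} + p·δ_{(1-c)^d}. If p + K ≤ 1/2, then R_α(Bern(P), Bern(Q)) ≥ r_α(p + K), for any α > 1. -/
noncomputable def bern {d : ℕ} (x : Fin d → ℝ) (b : Fin d → Bool) : ℝ :=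
  ∏ i, if b i then x i else 1 - x i

noncomputable def renyiD (α : ℝ) {ι : Type*} [Fintype ι] (P Q : ι → ℝ) : ℝ :=
  (α - 1)⁻¹ * Real.log (∑ i, P i ^ α * Q i ^ (1 - α))


open Finset Real

section Aux

lemma holder_sum {ι : Type*} (S : Finset ι) (f g : ι → ℝ) (α : ℝ) (hα : 1 < α)
    (hf : ∀ i, 0 ≤ f i) (hg : ∀ i, 0 ≤ g i) (hfg : ∀ i, g i = 0 → f i = 0) :
    (∑ i ∈ S, f i) ^ α * (∑ i ∈ S, g i) ^ (1 - α) ≤ ∑ i ∈ S, f i ^ α * g i ^ (1 - α) := by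
  have hα0 : (0:ℝ) < α := by linarith
  have hrhs : 0 ≤ ∑ i ∈ S, f i ^ α * g i ^ (1 - α) := by
    refine Finset.sum_nonneg fun i _ => mul_nonneg ?_ ?_ <;>
      exact Real.rpow_nonneg (by first | exact hf i | exact hg i) _
  set G := ∑ i ∈ S, g i with hG
  rcases eq_or_lt_of_le (Finset.sum_nonneg (fun i _ => hg i) : 0 ≤ G) with h0 | hGpos
  · have hgz : ∀ i ∈ S, g i = 0 := by
      intro i hi
      exact (Finset.sum_eq_zero_iff_of_nonneg (fun j _ => hg j)).mp h0.symm i hi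
    have hfz : ∑ i ∈ S, f i = 0 := Finset.sum_eq_zero fun i hi => hfg i (hgz i hi)
    rw [hfz, Real.zero_rpow (ne_of_gt hα0), zero_mul]
    exact hrhs
  · set w : ι → ℝ := fun i => g i / G with hw
    set z : ι → ℝ := fun i => f i / g i with hz
    have hw1 : ∑ i ∈ S, w i = 1 := by
      rw [← Finset.sum_div]; exact div_self (ne_of_gt hGpos)
    have jensen := Real.rpow_arith_mean_le_arith_mean_rpow S w z
      (fun i _ => div_nonneg (hg i) hGpos.le) hw1
      (fun i _ => div_nonneg (hf i) (hg i)) hα.le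
    have hwz : ∀ i, w i * z i = f i / G := by
      intro i
      rcases eq_or_lt_of_le (hg i) with hgi | hgi
      · simp [hw, hz, ← hgi, hfg i hgi.symm]
      · simp only [hw, hz]
        rw [div_mul_div_comm, mul_comm (g i) (f i), mul_div_mul_right _ _ hgi.ne']
    have hwzα : ∀ i, w i * z i ^ α = f i ^ α * g i ^ (1 - α) / G := by
      intro i
      rcases eq_or_lt_of_le (hg i) with hgi | hgi
      · simp [hw, hz, ← hgi, hfg i hgi.symm, Real.zero_rpow (ne_of_gt hα0)]
      · rw [hz, Real.div_rpow (hf i) (hg i), hw]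
        rw [Real.rpow_sub hgi, Real.rpow_one]
        field_simp
    rw [Finset.sum_congr rfl (fun i _ => hwz i), Finset.sum_congr rfl (fun i _ => hwzα i),
      ← Finset.sum_div, ← Finset.sum_div] at jensen
    have h2 : ((∑ i ∈ S, f i) / G) ^ α = (∑ i ∈ S, f i) ^ α / G ^ α :=
      Real.div_rpow (Finset.sum_nonneg fun i _ => hf i) hGpos.le α
    rw [h2, div_le_div_iff₀ (Real.rpow_pos_of_pos hGpos α) hGpos] at jensen
    calc (∑ i ∈ S, f i) ^ α * G ^ (1 - α)
        = (∑ i ∈ S, f i) ^ α * G / G ^ α := by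
          rw [Real.rpow_sub hGpos, Real.rpow_one]; ring
      _ ≤ ∑ i ∈ S, f i ^ α * g i ^ (1 - α) := by
          rw [div_le_iff₀ (Real.rpow_pos_of_pos hGpos α)]
          linarith [jensen]

-- ratio comparison: a^β * b^(-β) ≤ x^β * y^(-β) when a*y ≤ x*b
lemma ratio_rpow_le {a b x y β : ℝ} (hβ : 0 ≤ β) (ha : 0 ≤ a) (hb : 0 < b)
    (hx : 0 ≤ x) (hy : 0 < y) (h : a * y ≤ x * b) :
    a ^ β * b ^ (-β) ≤ x ^ β * y ^ (-β) := by
  have h1 : a / b ≤ x / y := by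
    rw [div_le_div_iff₀ hb hy]; linarith
  have h2 := Real.rpow_le_rpow (div_nonneg ha hb.le) h1 hβ
  rwa [Real.div_rpow ha hb.le, Real.div_rpow hx hy.le,
    div_eq_mul_inv, div_eq_mul_inv, ← Real.rpow_neg hb.le, ← Real.rpow_neg hy.le] at h2

lemma key_mono (α : ℝ) (hα : 1 < α) (q s t : ℝ) (hq : 0 < q) (hq2 : q ≤ 1/2)
    (ht : 0 < t) (htq : t ≤ q) (hs : 1 - q ≤ s) (hs1 : s ≤ 1) :
    q ^ α * (1-q) ^ (1-α) + (1-q) ^ α * q ^ (1-α)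
      ≤ s ^ α * t ^ (1-α) + (1-s) ^ α * (1-t) ^ (1-α) := by
  have h1α : 1 - α = -(α-1) := by ring
  have ht1 : t < 1 := by linarith
  -- Step 1: monotone in s on [1-q, 1]
  have step1 : (1-q) ^ α * t ^ (1-α) + q ^ α * (1-t) ^ (1-α)
      ≤ s ^ α * t ^ (1-α) + (1-s) ^ α * (1-t) ^ (1-α) := by
    set F : ℝ → ℝ := fun u => u ^ α * t ^ (1-α) + (1-u) ^ α * (1-t) ^ (1-α) with hF
    have hder : ∀ u : ℝ, HasDerivAt F
        (α * u ^ (α-1) * t ^ (1-α) - α * (1-u) ^ (α-1) * (1-t) ^ (1-α)) u := by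
      intro u
      have d1 : HasDerivAt (fun u : ℝ => u ^ α) (α * u ^ (α-1)) u := by
        simpa [mul_comm] using Real.hasDerivAt_rpow_const (p := α) (Or.inr hα.le)
      have d2 : HasDerivAt (fun u : ℝ => (1-u) ^ α) (α * (1-u) ^ (α-1) * (-1)) u := by
        have := (Real.hasDerivAt_rpow_const (x := 1-u) (p := α) (Or.inr hα.le)).comp u
          ((hasDerivAt_const u (1:ℝ)).sub (hasDerivAt_id u))
        simpa [mul_comm, Function.comp_def] using this
      have := ((d1.mul_const (t ^ (1-α)))).add ((d2.mul_const ((1-t) ^ (1-α))))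
      rw [hF]
      refine this.congr_deriv ?_
      ring
    have hmono : MonotoneOn F (Set.Icc (1-q) 1) := by
      apply monotoneOn_of_deriv_nonneg (convex_Icc _ _)
      · exact (Differentiable.continuous (fun u => (hder u).differentiableAt)).continuousOn
      · intro u hu
        exact ((hder u).differentiableAt).differentiableWithinAt
      · intro u hu
        rw [interior_Icc] at hu
        rw [(hder u).deriv]
        have hu1 : 1 - q < u := hu.1
        have hu2 : u < 1 := hu.2
        have hup : 0 < u := by linarith
        have key : (1-u) ^ (α-1) * (1-t) ^ (1-α) ≤ u ^ (α-1) * t ^ (1-α) := by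
          rw [h1α]
          exact ratio_rpow_le (by linarith) (by linarith) (by linarith) hup.le ht
            (by nlinarith)
        nlinarith [key, (by linarith : (0:ℝ) < α)]
    have := hmono (Set.mem_Icc.mpr ⟨le_refl _, by linarith⟩)
      (Set.mem_Icc.mpr ⟨hs, hs1⟩) hs
    simpa [hF] using this
  -- Step 2: antitone in t on [t, q]
  have step2 : q ^ α * (1-q) ^ (1-α) + (1-q) ^ α * q ^ (1-α)
      ≤ (1-q) ^ α * t ^ (1-α) + q ^ α * (1-t) ^ (1-α) := by
    set G : ℝ → ℝ := fun u => (1-q) ^ α * u ^ (1-α) + q ^ α * (1-u) ^ (1-α) with hG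
    have hanti : AntitoneOn G (Set.Icc t q) := by
      apply antitoneOn_of_deriv_nonpos (convex_Icc _ _)
      · intro u hu
        have hu0 : (0:ℝ) < u := lt_of_lt_of_le ht hu.1
        have hu1 : u < 1 := by have := hu.2; linarith
        apply ContinuousWithinAt.add
        · exact (continuousAt_const.mul
            (Real.continuousAt_rpow_const u (1-α) (Or.inl hu0.ne'))).continuousWithinAt
        · exact (continuousAt_const.mul
            ((Real.continuousAt_rpow_const (1-u) (1-α)
              (Or.inl (by linarith))).comp
              (continuousAt_const.sub continuousAt_id))).continuousWithinAt
      · intro u hu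
        rw [interior_Icc] at hu
        have hu0 : (0:ℝ) < u := lt_trans ht hu.1
        have hu1 : u < 1 := by have := hu.2; linarith
        apply DifferentiableAt.differentiableWithinAt
        apply DifferentiableAt.add
        · exact (differentiableAt_const _).mul
            (Real.differentiableAt_rpow_const_of_ne (1-α) hu0.ne')
        · exact (differentiableAt_const _).mul
            ((Real.differentiableAt_rpow_const_of_ne (1-α) (by linarith : (1:ℝ)-u ≠ 0)).comp u
              ((differentiableAt_const _).sub differentiableAt_id))
      · intro u hu
        rw [interior_Icc] at hu
        have hu0 : (0:ℝ) < u := lt_trans ht hu.1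
        have huq : u < q := hu.2
        have hu1 : u < 1 := by linarith
        have d1 : HasDerivAt (fun u : ℝ => u ^ (1-α)) ((1-α) * u ^ (-α)) u := by
          have := Real.hasDerivAt_rpow_const (x := u) (p := 1-α) (Or.inl hu0.ne')
          simpa [mul_comm, show (1-α) - 1 = -α by ring] using this
        have d2 : HasDerivAt (fun u : ℝ => (1-u) ^ (1-α)) ((1-α) * (1-u) ^ (-α) * (-1)) u := by
          have := (Real.hasDerivAt_rpow_const (x := 1-u) (p := 1-α)
            (Or.inl (by linarith : (1:ℝ)-u ≠ 0))).comp u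
            ((hasDerivAt_const u (1:ℝ)).sub (hasDerivAt_id u))
          simpa [mul_comm, show (1-α) - 1 = -α by ring, Function.comp_def] using this
        have dG : HasDerivAt G
            ((1-q) ^ α * ((1-α) * u ^ (-α)) + q ^ α * ((1-α) * (1-u) ^ (-α) * (-1))) u :=
          ((d1.const_mul ((1-q) ^ α))).add ((d2.const_mul (q ^ α)))
        rw [dG.deriv]
        have key : q ^ α * (1-u) ^ (-α) ≤ (1-q) ^ α * u ^ (-α) := by
          exact ratio_rpow_le (by linarith) hq.le (by linarith) (by linarith) hu0
            (by nlinarith)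
        nlinarith [key, (by linarith : α - 1 > 0), Real.rpow_nonneg (by linarith : (0:ℝ) ≤ 1-q) α,
          Real.rpow_nonneg hq.le α]
    have := hanti (Set.mem_Icc.mpr ⟨le_refl _, htq⟩) (Set.mem_Icc.mpr ⟨htq, le_refl _⟩) htq
    rw [hG] at this
    simp only at this
    linarith
  linarith
def kk {n : ℕ} (b : Fin n → Bool) : ℕ := (univ.filter (fun i => b i = true)).card

lemma kk_le {n : ℕ} (b : Fin n → Bool) : kk b ≤ n := by
  have := Finset.card_filter_le (univ : Finset (Fin n)) (fun i => b i = true)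
  simpa [kk] using this

lemma bern_const_eq {n : ℕ} (c : ℝ) (b : Fin n → Bool) :
    bern (fun _ => c) b = c ^ (kk b) * (1 - c) ^ (n - kk b) := by
  rw [bern, ← Finset.prod_filter_mul_prod_filter_not univ (fun i => b i = true)]
  have h1 : ∏ i ∈ univ.filter (fun i => b i = true), (if b i then c else 1 - c) = c ^ kk b := by
    rw [Finset.prod_congr rfl (fun i hi => ?_), Finset.prod_const]
    · rfl
    · simp [(Finset.mem_filter.mp hi).2]
  have h2 : ∏ i ∈ univ.filter (fun i => ¬ (b i = true)), (if b i then c else 1 - c)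
      = (1 - c) ^ (n - kk b) := by
    rw [Finset.prod_congr rfl (fun i hi => ?_), Finset.prod_const]
    · congr 1
      have := Finset.card_filter_add_card_filter_not
        (s := (univ : Finset (Fin n))) (p := fun i => b i = true)
      simp only [Finset.card_univ, Fintype.card_fin] at this
      unfold kk
      omega
    · have := (Finset.mem_filter.mp hi).2
      simp only [Bool.not_eq_true] at this
      simp [this]
  rw [h1, h2]

lemma bern_sum_one {n : ℕ} (c : ℝ) : ∑ b : Fin n → Bool, bern (fun _ => c) b = 1 := by
  have h := Finset.sum_prod_piFinset (univ : Finset Bool)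
    (fun (i : Fin n) (x : Bool) => if x then c else 1 - c)
  rw [Fintype.piFinset_univ] at h
  simp only [bern]
  rw [h]
  simp

lemma bern_nonneg {n : ℕ} {c : ℝ} (hc : 0 ≤ c) (hc1 : c ≤ 1) (b : Fin n → Bool) :
    0 ≤ bern (fun _ => c) b := by
  apply Finset.prod_nonneg
  intro i _
  by_cases h : b i <;> simp [h] <;> linarith

lemma sumA_le_K (n : ℕ) (c : ℝ) (hc : 0 ≤ c) (hc2 : c ≤ 1/2) :
    ∑ b ∈ univ.filter (fun b : Fin n → Bool => n ≤ 2 * kk b), bern (fun _ => c) b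
      ≤ Real.exp (-2 * (1/2 - c)^2 * n) := by
  set t := Real.sqrt (c * (1 - c)) with htdef
  have ht0 : 0 ≤ t := Real.sqrt_nonneg _
  have ht2 : t ^ 2 = c * (1 - c) := Real.sq_sqrt (by nlinarith)
  have hct : c ≤ t := by
    nlinarith [Real.sq_sqrt (show (0:ℝ) ≤ c * (1-c) by nlinarith), Real.sqrt_nonneg (c*(1-c))]
  -- each term ≤ t ^ n
  have hterm : ∀ b : Fin n → Bool, n ≤ 2 * kk b → bern (fun _ => c) b ≤ t ^ n := by
    intro b hb
    rw [bern_const_eq]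
    have hk := kk_le b
    set k := kk b
    have h1 : c ^ k * (1 - c) ^ (n - k) = c ^ (2*k - n) * (c * (1-c)) ^ (n - k) := by
      rw [mul_pow, ← mul_assoc, ← pow_add]
      congr 2
      omega
    rw [h1, ← ht2]
    calc c ^ (2*k-n) * (t^2) ^ (n-k) ≤ t ^ (2*k-n) * (t^2)^(n-k) := by
          apply mul_le_mul_of_nonneg_right (pow_le_pow_left₀ hc hct _)
          positivity
      _ = t ^ n := by rw [← pow_mul, ← pow_add]; congr 1; omega
  set E := Real.exp (-2 * (1/2 - c)^2) with hE
  have hEpos : 0 < E := Real.exp_pos _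
  have h2tE : 2 * t ≤ E := by
    have h4 : (2*t)^2 ≤ E^2 := by
      have hE2 : E ^ 2 = Real.exp (-4 * (1/2-c)^2) := by
        rw [hE, sq, ← Real.exp_add]; ring_nf
      rw [hE2]
      have := Real.add_one_le_exp (-4 * (1/2-c)^2)
      nlinarith [ht2]
    nlinarith [h4, ht0, hEpos]
  calc ∑ b ∈ univ.filter (fun b : Fin n → Bool => n ≤ 2 * kk b), bern (fun _ => c) b
      ≤ ∑ _b ∈ univ.filter (fun b : Fin n → Bool => n ≤ 2 * kk b), t ^ n := by
        apply Finset.sum_le_sum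
        intro b hb
        exact hterm b (Finset.mem_filter.mp hb).2
    _ = (univ.filter (fun b : Fin n → Bool => n ≤ 2 * kk b)).card * t ^ n := by
        rw [Finset.sum_const, nsmul_eq_mul]
    _ ≤ 2 ^ n * t ^ n := by
        apply mul_le_mul_of_nonneg_right _ (by positivity)
        have h1 : (univ.filter (fun b : Fin n → Bool => n ≤ 2 * kk b)).card
            ≤ (univ : Finset (Fin n → Bool)).card := Finset.card_filter_le _ _
        have h2 : (univ : Finset (Fin n → Bool)).card = 2 ^ n := by
          simp [Finset.card_univ]
        calc ((univ.filter (fun b : Fin n → Bool => n ≤ 2 * kk b)).card : ℝ)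
            ≤ ((univ : Finset (Fin n → Bool)).card : ℝ) := by exact_mod_cast h1
          _ = 2 ^ n := by rw [h2]; push_cast; ring
    _ = (2*t) ^ n := by rw [mul_pow]
    _ ≤ E ^ n := pow_le_pow_left₀ (by positivity) h2tE n
    _ = Real.exp (-2 * (1/2 - c)^2 * n) := by
        rw [hE, ← Real.exp_nat_mul]
        congr 1
        push_cast
        ring

lemma flip_sum_le (n : ℕ) (c : ℝ) (hc : 0 ≤ c) (hc2 : c ≤ 1/2) :
    ∑ b ∈ univ.filter (fun b : Fin n → Bool => ¬ (n ≤ 2 * kk b)), bern (fun _ => 1 - c) b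
      ≤ ∑ b ∈ univ.filter (fun b : Fin n → Bool => n ≤ 2 * kk b), bern (fun _ => c) b := by
  have hkknot : ∀ b : Fin n → Bool, kk (fun i => !(b i)) = n - kk b := by
    intro b
    have h := Finset.card_filter_add_card_filter_not
      (s := (univ : Finset (Fin n))) (p := fun i => b i = true)
    simp only [Finset.card_univ, Fintype.card_fin] at h
    have h2 : kk (fun i => !(b i))
        = (univ.filter (fun a => ¬ b a = true)).card := by
      unfold kk
      congr 1
      ext i
      simp
    have h3 : kk b = (univ.filter (fun i => b i = true)).card := rfl
    omega
  have key : ∑ b ∈ univ.filter (fun b : Fin n → Bool => ¬ (n ≤ 2 * kk b)), bern (fun _ => 1 - c) b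
      = ∑ b ∈ univ.filter (fun b : Fin n → Bool => n < 2 * kk b), bern (fun _ => c) b := by
    apply Finset.sum_nbij' (fun b => fun i => !(b i)) (fun b => fun i => !(b i))
    · intro b hb
      simp only [Finset.mem_filter, Finset.mem_univ, true_and, not_le] at hb ⊢
      rw [hkknot]
      have := kk_le b
      omega
    · intro b hb
      simp only [Finset.mem_filter, Finset.mem_univ, true_and, not_le] at hb ⊢
      rw [hkknot]
      have := kk_le b
      omega
    · intro b _; funext i; simp
    · intro b _; funext i; simp
    · intro b _
      rw [bern, bern]
      apply Finset.prod_congr rfl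
      intro i _
      by_cases h : b i <;> simp [h] <;> ring
  rw [key]
  apply Finset.sum_le_sum_of_subset_of_nonneg
  · intro b hb
    simp only [Finset.mem_filter, Finset.mem_univ, true_and] at hb ⊢
    omega
  · intro b _ _
    exact bern_nonneg hc (by linarith) b

end Aux

lemma arith_bounds (p K eps del : ℝ) (hp : 0 < p) (hp1 : p < 1)
    (heps0 : 0 ≤ eps) (hepsK : eps ≤ K) (hdel0 : 0 ≤ del) (hdelK : del ≤ K)
    (hKpos : 0 < K) (hKle : K ≤ 1/2 - p) :
    (1 - (p + K) ≤ p * eps + (1 - p) * (1 - del)) ∧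
    (p * eps + (1 - p) * (1 - del) ≤ 1) ∧
    (0 < (1 - p) * eps + p * (1 - del)) ∧
    ((1 - p) * eps + p * (1 - del) ≤ p + K) := by
  refine ⟨by nlinarith, by nlinarith, by nlinarith, by nlinarith⟩

theorem stmt7 (α : ℝ) (hα : 1 < α) (n : ℕ) (hn : 1 ≤ n) (c p : ℝ)
    (hc : 0 ≤ c) (hc2 : c < 1/2) (hp : 0 < p) (hp2 : p ≤ 1/2)
    (hK : p + Real.exp (-2 * (1/2 - c)^2 * n) ≤ 1/2) :
    let K := Real.exp (-2 * (1/2 - c)^2 * n)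
    let bp : (Fin n → Bool) → ℝ := fun b =>
      p * bern (fun _ => c) b + (1 - p) * bern (fun _ => 1 - c) b
    let bq : (Fin n → Bool) → ℝ := fun b =>
      (1 - p) * bern (fun _ => c) b + p * bern (fun _ => 1 - c) b
    ralpha α (p + K) ≤ renyiD α bp bq := by
  intro K bp bq
  have hKpos : 0 < K := Real.exp_pos _
  have hKle : K ≤ 1/2 - p := by
    have : p + K ≤ 1/2 := hK
    linarith
  set q := p + K with hqdef
  have hq : 0 < q := by positivity
  have hq2 : q ≤ 1/2 := hK
  have hc1 : c ≤ 1 := by linarith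
  have hc2' : c ≤ 1/2 := le_of_lt hc2
  have hp1 : p < 1 := by linarith
  set A := univ.filter (fun b : Fin n → Bool => n ≤ 2 * kk b) with hA
  set Ac := univ.filter (fun b : Fin n → Bool => ¬ (n ≤ 2 * kk b)) with hAc
  have hbc0 : ∀ b, 0 ≤ bern (fun _ : Fin n => c) b := bern_nonneg hc hc1
  have hb10 : ∀ b, 0 ≤ bern (fun _ : Fin n => 1 - c) b :=
    bern_nonneg (by linarith) (by linarith)
  have hbp0 : ∀ b, 0 ≤ bp b := fun b => by
    have := hbc0 b; have := hb10 b
    simp only [bp]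
    nlinarith
  have hbq0 : ∀ b, 0 ≤ bq b := fun b => by
    have := hbc0 b; have := hb10 b
    simp only [bq]
    nlinarith
  have hsupp : ∀ b, bq b = 0 → bp b = 0 := by
    intro b h
    have h1 := hbc0 b; have h2 := hb10 b
    simp only [bq] at h
    have hz1 : bern (fun _ : Fin n => c) b = 0 := by nlinarith
    have hz2 : bern (fun _ : Fin n => 1 - c) b = 0 := by nlinarith
    simp only [bp, hz1, hz2]
    ring
  set eps := ∑ b ∈ A, bern (fun _ : Fin n => c) b with heps
  set del := ∑ b ∈ Ac, bern (fun _ : Fin n => 1 - c) b with hdel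
  have heps0 : 0 ≤ eps := Finset.sum_nonneg fun b _ => hbc0 b
  have hdel0 : 0 ≤ del := Finset.sum_nonneg fun b _ => hb10 b
  have hepsK : eps ≤ K := sumA_le_K n c hc hc2'
  have hdelK : del ≤ K := le_trans (flip_sum_le n c hc hc2') hepsK
  have hsplitc : eps + ∑ b ∈ Ac, bern (fun _ : Fin n => c) b = 1 := by
    rw [heps, hA, hAc, Finset.sum_filter_add_sum_filter_not]
    exact bern_sum_one c
  have hsplit1 : (∑ b ∈ A, bern (fun _ : Fin n => 1 - c) b) + del = 1 := by
    rw [hdel, hA, hAc, Finset.sum_filter_add_sum_filter_not]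
    exact bern_sum_one (1 - c)
  set s := ∑ b ∈ A, bp b with hs_def
  set t := ∑ b ∈ A, bq b with ht_def
  have hs_eq : s = p * eps + (1 - p) * (1 - del) := by
    rw [hs_def]
    simp only [bp]
    rw [Finset.sum_add_distrib, ← Finset.mul_sum, ← Finset.mul_sum, ← heps]
    congr 1
    rw [show (1:ℝ) - del = ∑ b ∈ A, bern (fun _ : Fin n => 1 - c) b by linarith]
  have ht_eq : t = (1 - p) * eps + p * (1 - del) := by
    rw [ht_def]
    simp only [bq]
    rw [Finset.sum_add_distrib, ← Finset.mul_sum, ← Finset.mul_sum, ← heps]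
    congr 1
    rw [show (1:ℝ) - del = ∑ b ∈ A, bern (fun _ : Fin n => 1 - c) b by linarith]
  have hsAc : ∑ b ∈ Ac, bp b = 1 - s := by
    have htot : ∑ b, bp b = 1 := by
      simp only [bp]
      rw [Finset.sum_add_distrib, ← Finset.mul_sum, ← Finset.mul_sum,
        bern_sum_one, bern_sum_one]
      ring
    have := Finset.sum_filter_add_sum_filter_not univ
      (fun b : Fin n → Bool => n ≤ 2 * kk b) bp
    rw [← hA, ← hAc, ← hs_def] at this
    linarith [this.trans htot]
  have htAc : ∑ b ∈ Ac, bq b = 1 - t := by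
    have htot : ∑ b, bq b = 1 := by
      simp only [bq]
      rw [Finset.sum_add_distrib, ← Finset.mul_sum, ← Finset.mul_sum,
        bern_sum_one, bern_sum_one]
      ring
    have := Finset.sum_filter_add_sum_filter_not univ
      (fun b : Fin n → Bool => n ≤ 2 * kk b) bq
    rw [← hA, ← hAc, ← ht_def] at this
    linarith [this.trans htot]
  -- bounds
  obtain ⟨ha1, ha2, ha3, ha4⟩ :=
    arith_bounds p K eps del hp hp1 heps0 hepsK hdel0 hdelK hKpos hKle
  have hs_lb : 1 - q ≤ s := by rw [hs_eq, hqdef]; exact ha1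
  have hs_ub : s ≤ 1 := by rw [hs_eq]; exact ha2
  have ht_lb : 0 < t := by rw [ht_eq]; exact ha3
  have ht_ub : t ≤ q := by rw [ht_eq, hqdef]; exact ha4
  -- Hölder
  have hHA : s ^ α * t ^ (1 - α) ≤ ∑ b ∈ A, bp b ^ α * bq b ^ (1 - α) :=
    holder_sum A bp bq α hα hbp0 hbq0 hsupp
  have hHAc : (1 - s) ^ α * (1 - t) ^ (1 - α) ≤ ∑ b ∈ Ac, bp b ^ α * bq b ^ (1 - α) := by
    have := holder_sum Ac bp bq α hα hbp0 hbq0 hsupp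
    rwa [hsAc, htAc] at this
  have hsum : ∑ b ∈ A, bp b ^ α * bq b ^ (1 - α) + ∑ b ∈ Ac, bp b ^ α * bq b ^ (1 - α)
      = ∑ b, bp b ^ α * bq b ^ (1 - α) := by
    rw [hA, hAc, Finset.sum_filter_add_sum_filter_not]
  have hmono := key_mono α hα q s t hq hq2 ht_lb ht_ub hs_lb hs_ub
  have hT0 : 0 < q ^ α * (1 - q) ^ (1 - α) + (1 - q) ^ α * q ^ (1 - α) := by
    have h1 : (0:ℝ) < 1 - q := by linarith
    positivity
  have hfinal : q ^ α * (1 - q) ^ (1 - α) + (1 - q) ^ α * q ^ (1 - α)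
      ≤ ∑ b, bp b ^ α * bq b ^ (1 - α) := by
    rw [← hsum]
    linarith
  rw [ralpha, renyiD]
  apply mul_le_mul_of_nonneg_left _ (inv_nonneg.mpr (by linarith : (0:ℝ) ≤ α - 1))
  exact Real.log_le_log hT0 hfinal
end
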